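/- Let A be a d×d real symmetric positive definite matrix whose eigenvalues all lie in [ℓ, L] with 0 < ℓ ≤ L and κ = L/ℓ > 1, let b ∈ ℝ^d, f(x) = ½xᵀAx − bᵀx, and x* = A⁻¹b. Fix η > 0 and let s and h be the ESGD parameters. If the iterates satisfy x_{n+1} − x* = R_s(−hA)(x_n − x*), then f(x_{n+1}) − f(x*) ≤ α_s(η)² · (f(x_n) − f(x*)) for every n. -/

import Mathlib

open Polynomial Matrix

noncomputable section

/-- The degree-`n` Chebyshev polynomial of the first kind over `ℝ`,
characterized by `T_n (cos θ) = cos (n θ)`. -/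
def chebT (n : ℕ) : Polynomial ℝ := Polynomial.Chebyshev.T ℝ (n : ℤ)

/-- `ω₀ = 1 + η / s²`. -/
def omega0 (s : ℕ) (η : ℝ) : ℝ := 1 + η / (s : ℝ) ^ 2

/-- `ω₁ = T_s(ω₀) / T_s'(ω₀)`. -/
def omega1 (s : ℕ) (η : ℝ) : ℝ :=
  (chebT s).eval (omega0 s η) / (Polynomial.derivative (chebT s)).eval (omega0 s η)

/-- `α_s(η) = 1 / T_s(ω₀)`. -/
def alphaS (s : ℕ) (η : ℝ) : ℝ := ((chebT s).eval (omega0 s η))⁻¹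

/-- The stability polynomial `R_s(z) = T_s(ω₀ + ω₁ z) / T_s(ω₀)`. -/
def RsPoly (s : ℕ) (η : ℝ) : Polynomial ℝ :=
  Polynomial.C (alphaS s η) *
    (chebT s).comp (Polynomial.C (omega0 s η) + Polynomial.C (omega1 s η) * Polynomial.X)

/-- The polynomial `B_s` with `ζ · B_s(ζ) = R_s(ζ) − 1`. -/
def BsPoly (s : ℕ) (η : ℝ) : Polynomial ℝ := (RsPoly s η - 1) /ₘ Polynomial.X

/-- The ESGD stage number `s = ⌈√((κ−1)η/2)⌉`. -/
def stages (κ η : ℝ) : ℕ := ⌈Real.sqrt ((κ - 1) * η / 2)⌉₊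

/-- The ESGD step size `h = (ω₀ − 1)/(ω₁ ℓ)`. -/
def stepSize (κ η ℓ : ℝ) : ℝ :=
  (omega0 (stages κ η) η - 1) / (omega1 (stages κ η) η * ℓ)

/-- The constant `C(η) = ω₁ α_s(η) / (ω₀ − 1)`. -/
def Ceta (s : ℕ) (η : ℝ) : ℝ := omega1 s η * alphaS s η / (omega0 s η - 1)

end


lemma cheb_T_aux (x : ℝ) (hx : 1 ≤ x) : ∀ n : ℕ,
    1 ≤ (Chebyshev.T ℝ n).eval x ∧ (Chebyshev.T ℝ n).eval x ≤ (Chebyshev.T ℝ (n+1)).eval x := by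
  intro n
  induction n with
  | zero => simp [Chebyshev.T_zero, Chebyshev.T_one, hx]
  | succ k ih =>
    obtain ⟨h1, h2⟩ := ih
    have hT2 : (Chebyshev.T ℝ ((k:ℤ)+1+1)).eval x
        = 2*x*(Chebyshev.T ℝ ((k:ℤ)+1)).eval x - (Chebyshev.T ℝ k).eval x := by
      have h := Chebyshev.T_add_two ℝ (k : ℤ)
      rw [show (k:ℤ)+1+1 = (k:ℤ)+2 by ring, h]
      simp
    have h12 : 1 ≤ (Chebyshev.T ℝ ((k:ℤ)+1)).eval x := le_trans h1 h2
    constructor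
    · push_cast; linarith
    · push_cast; push_cast at hT2; rw [hT2]; nlinarith

lemma cheb_U_aux (x : ℝ) (hx : 1 ≤ x) : ∀ n : ℕ,
    1 ≤ (Chebyshev.U ℝ n).eval x ∧ (Chebyshev.U ℝ n).eval x ≤ (Chebyshev.U ℝ (n+1)).eval x := by
  intro n
  induction n with
  | zero => simp [Chebyshev.U_zero, Chebyshev.U_one]; linarith
  | succ k ih =>
    obtain ⟨h1, h2⟩ := ih
    have hT2 : (Chebyshev.U ℝ ((k:ℤ)+1+1)).eval x
        = 2*x*(Chebyshev.U ℝ ((k:ℤ)+1)).eval x - (Chebyshev.U ℝ k).eval x := by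
      have h := Chebyshev.U_add_two ℝ (k : ℤ)
      rw [show (k:ℤ)+1+1 = (k:ℤ)+2 by ring, h]
      simp
    have h12 : 1 ≤ (Chebyshev.U ℝ ((k:ℤ)+1)).eval x := le_trans h1 h2
    constructor
    · push_cast; linarith
    · push_cast; push_cast at hT2; rw [hT2]; nlinarith

lemma cheb_T_abs_le (u : ℝ) (hu : u ∈ Set.Icc (-1:ℝ) 1) (n : ℤ) :
    |(Chebyshev.T ℝ n).eval u| ≤ 1 := by
  have h1 : Real.cos (Real.arccos u) = u := Real.cos_arccos hu.1 hu.2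
  have := Chebyshev.T_real_cos (Real.arccos u) n
  rw [h1] at this
  rw [this]
  exact Real.abs_cos_le_one _


lemma aeval_diagonal {d : ℕ} (v : Fin d → ℝ) (p : Polynomial ℝ) :
    Polynomial.aeval (Matrix.diagonal v) p = Matrix.diagonal (fun i => p.eval (v i)) := by
  have h := Polynomial.aeval_algHom_apply ((Matrix.diagonalAlgHom ℝ : (Fin d → ℝ) →ₐ[ℝ] _)) v p
  rw [Matrix.diagonalAlgHom_apply] at h
  rw [h, Matrix.diagonalAlgHom_apply]
  have hv : (Polynomial.aeval v) p = fun i => p.eval (v i) := by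
    funext i
    have h2 := Polynomial.aeval_algHom_apply (Pi.evalAlgHom ℝ (fun _ : Fin d => ℝ) i) v p
    rw [show (Pi.evalAlgHom ℝ (fun _ : Fin d => ℝ) i) ((Polynomial.aeval v) p) = (Polynomial.aeval v) p i from rfl] at h2
    rw [show ((Polynomial.aeval v) p) i = (Polynomial.aeval v) p i from rfl, ← h2,
      ← Polynomial.coe_aeval_eq_eval]
    rfl
  rw [hv]

lemma conjPow {d : ℕ} (U D : Matrix (Fin d) (Fin d) ℝ)
    (h1 : U * star U = 1) (h2 : star U * U = 1) (n : ℕ) :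
    (U * D * star U) ^ n = U * D ^ n * star U := by
  induction n with
  | zero => simp [h1]
  | succ k ih =>
      rw [pow_succ, ih, pow_succ]
      calc U * D ^ k * star U * (U * D * star U)
          = U * D ^ k * (star U * U) * D * star U := by noncomm_ring
        _ = U * (D ^ k * D) * star U := by rw [h2]; noncomm_ring

lemma conj_aeval {d : ℕ} (U D : Matrix (Fin d) (Fin d) ℝ)
    (h1 : U * star U = 1) (h2 : star U * U = 1) (p : Polynomial ℝ) :
    Polynomial.aeval (U * D * star U) p = U * Polynomial.aeval D p * star U := by
  induction p using Polynomial.induction_on' with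
  | add p q hp hq => rw [map_add, map_add, hp, hq]; noncomm_ring
  | monomial n a =>
      rw [Polynomial.aeval_monomial, Polynomial.aeval_monomial, conjPow U D h1 h2,
        Algebra.algebraMap_eq_smul_one]
      simp [smul_mul_assoc, mul_smul_comm]

set_option maxHeartbeats 1000000 in
lemma key_scalar (ℓ L η : ℝ) (hℓ : 0 < ℓ) (hℓL : ℓ ≤ L) (hκ : 1 < L/ℓ) (hη : 0 < η)
    (μ : ℝ) (hμ : μ ∈ Set.Icc ℓ L) :
    ((RsPoly (stages (L/ℓ) η) η).eval (-(stepSize (L/ℓ) η ℓ) * μ))^2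
      ≤ (alphaS (stages (L/ℓ) η) η)^2 := by
  set s := stages (L/ℓ) η with hsdef
  have hc : 0 < (L/ℓ - 1) * η / 2 := by nlinarith
  have hs0 : 0 < s := by
    rw [hsdef, stages]
    exact Nat.ceil_pos.mpr (Real.sqrt_pos.mpr hc)
  have hsge : Real.sqrt ((L/ℓ - 1) * η / 2) ≤ (s : ℝ) := Nat.le_ceil _
  have hs2 : (L/ℓ - 1) * η ≤ 2 * (s:ℝ)^2 := by
    have h1 : (L/ℓ - 1) * η / 2 ≤ (s:ℝ)^2 := by
      have := Real.sq_sqrt hc.le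
      nlinarith [Real.sqrt_nonneg ((L/ℓ - 1) * η / 2)]
    linarith
  have hspos : (0:ℝ) < (s:ℝ)^2 := by positivity
  have hω0 : 1 < omega0 s η := by
    have : 0 < η / (s:ℝ)^2 := div_pos hη hspos
    rw [omega0]; linarith
  -- T value
  have hT : 1 ≤ (chebT s).eval (omega0 s η) := (cheb_T_aux _ hω0.le s).1
  -- derivative value
  have hT' : 0 < (Polynomial.derivative (chebT s)).eval (omega0 s η) := by
    rw [chebT, Chebyshev.T_derivative_eq_U]
    have hU : 1 ≤ (Chebyshev.U ℝ ((s:ℤ) - 1)).eval (omega0 s η) := by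
      have h := (cheb_U_aux _ hω0.le (s-1)).1
      rwa [show (((s-1:ℕ)):ℤ) = (s:ℤ) - 1 by omega] at h
    have : ((s:ℤ) * Chebyshev.U ℝ ((s:ℤ)-1)).eval (omega0 s η)
        = (s:ℝ) * (Chebyshev.U ℝ ((s:ℤ)-1)).eval (omega0 s η) := by
      simp
    rw [this]
    have : (0:ℝ) < (s:ℝ) := by exact_mod_cast hs0
    nlinarith
  have hTpos : 0 < (chebT s).eval (omega0 s η) := lt_of_lt_of_le one_pos hT
  have hω1 : 0 < omega1 s η := div_pos hTpos hT'
  -- the argument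
  have hμl : ℓ ≤ μ := hμ.1
  have hμL : μ ≤ L := hμ.2
  have harg : omega0 s η + omega1 s η * (-(stepSize (L/ℓ) η ℓ) * μ)
      = omega0 s η - (omega0 s η - 1) * μ / ℓ := by
    rw [stepSize, ← hsdef]
    field_simp
    ring
  set u := omega0 s η - (omega0 s η - 1) * μ / ℓ with hudef
  have hu1 : u ≤ 1 := by
    rw [hudef]
    have h1 : 1 ≤ μ / ℓ := (one_le_div hℓ).mpr hμl
    have heq : (omega0 s η - 1) * μ / ℓ = (omega0 s η - 1) * (μ/ℓ) := by ring
    rw [heq]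
    nlinarith
  have hω0m1 : omega0 s η - 1 = η / (s:ℝ)^2 := by rw [omega0]; ring
  have hu2 : -1 ≤ u := by
    rw [hudef, hω0m1]
    have h2 : μ / ℓ ≤ L / ℓ := by gcongr
    have h3 : η / (s:ℝ)^2 * (L/ℓ - 1) ≤ 2 := by
      rw [div_mul_eq_mul_div, mul_comm]
      rw [div_le_iff₀ hspos]
      linarith
    have h4 : 0 < η / (s:ℝ)^2 := by positivity
    have h5 : η / (s:ℝ)^2 * (μ/ℓ) ≤ η / (s:ℝ)^2 * (L/ℓ) := by nlinarith
    have h6 : η / (s:ℝ)^2 * μ / ℓ = η / (s:ℝ)^2 * (μ/ℓ) := by ring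
    rw [omega0, h6]
    nlinarith
  -- eval of RsPoly
  have heval : (RsPoly s η).eval (-(stepSize (L/ℓ) η ℓ) * μ)
      = alphaS s η * (chebT s).eval u := by
    rw [RsPoly, eval_mul, eval_C, eval_comp]
    simp only [eval_add, eval_C, eval_mul, eval_X]
    rw [harg]
  rw [heval]
  have habs : |(chebT s).eval u| ≤ 1 := cheb_T_abs_le u ⟨hu2, hu1⟩ (s:ℤ)
  have h6 := abs_le.mp habs
  nlinarith [mul_nonneg (mul_nonneg (sq_nonneg (alphaS s η))
    (by linarith [h6.2] : (0:ℝ) ≤ 1 - (chebT s).eval u))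
    (by linarith [h6.1] : (0:ℝ) ≤ 1 + (chebT s).eval u)]

lemma myConjMul {d : ℕ} (U D1 D2 : Matrix (Fin d) (Fin d) ℝ) (h2 : star U * U = 1) :
    (U * D1 * star U) * (U * D2 * star U) = U * (D1 * D2) * star U := by
  calc (U * D1 * star U) * (U * D2 * star U)
      = U * D1 * (star U * U) * D2 * star U := by noncomm_ring
    _ = U * (D1 * D2) * star U := by rw [h2]; noncomm_ring


/-- ESGD on a strongly convex quadratic: if `A` is symmetric positive definite with all
eigenvalues in `[ℓ, L]`, `κ = L/ℓ > 1`, `f(x) = ½xᵀAx − bᵀx` with minimizer `x* = A⁻¹b`,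
and the iterates satisfy `x_{n+1} − x* = R_s(−hA)(xₙ − x*)` with the ESGD parameters
`s`, `h`, then `f(x_{n+1}) − f(x*) ≤ α_s(η)² (f(xₙ) − f(x*))` for every `n`. -/
theorem esgd_quadratic_decay {d : ℕ} (ℓ L η : ℝ) (hℓ : 0 < ℓ) (hℓL : ℓ ≤ L)
    (hκ : 1 < L / ℓ) (hη : 0 < η)
    (A : Matrix (Fin d) (Fin d) ℝ) (hA : A.PosDef)
    (hspec : spectrum ℝ A ⊆ Set.Icc ℓ L)
    (b : Fin d → ℝ) (f : (Fin d → ℝ) → ℝ)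
    (hf : ∀ x, f x = (1 / 2) * (x ⬝ᵥ A.mulVec x) - b ⬝ᵥ x)
    (xstar : Fin d → ℝ) (hxstar : xstar = A⁻¹.mulVec b)
    (x : ℕ → Fin d → ℝ)
    (hiter : ∀ n, x (n + 1) - xstar =
      (Polynomial.aeval ((-(stepSize (L / ℓ) η ℓ)) • A)
          (RsPoly (stages (L / ℓ) η) η)).mulVec (x n - xstar)) :
    ∀ n, f (x (n + 1)) - f xstar ≤
      (alphaS (stages (L / ℓ) η) η) ^ 2 * (f (x n) - f xstar) := by
  intro n
  set s := stages (L / ℓ) η with hsdef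
  set hh := stepSize (L / ℓ) η ℓ with hhdef
  set α := alphaS s η with hαdef
  -- minimizer
  have hdet : IsUnit A.det := hA.det_pos.ne'.isUnit
  have hAx : A.mulVec xstar = b := by
    rw [hxstar, Matrix.mulVec_mulVec, Matrix.mul_nonsing_inv A hdet, Matrix.one_mulVec]
  have hH : A.IsHermitian := hA.isHermitian
  have hsymA : Aᵀ = A := by
    have := hH.eq
    rwa [Matrix.conjTranspose_eq_transpose_of_trivial] at this
  -- f difference formula
  have ffd : ∀ y : Fin d → ℝ, f y - f xstar
      = (1/2) * ((y - xstar) ⬝ᵥ A.mulVec (y - xstar)) := by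
    intro y
    have e1 : xstar ⬝ᵥ A.mulVec y = b ⬝ᵥ y := by
      rw [Matrix.dotProduct_mulVec, ← Matrix.mulVec_transpose, hsymA, hAx]
    have e2 : y ⬝ᵥ A.mulVec xstar = y ⬝ᵥ b := by rw [hAx]
    have e3 : xstar ⬝ᵥ A.mulVec xstar = xstar ⬝ᵥ b := by rw [hAx]
    have hby : b ⬝ᵥ y = y ⬝ᵥ b := dotProduct_comm _ _
    have hbx : b ⬝ᵥ xstar = xstar ⬝ᵥ b := dotProduct_comm _ _
    have expand : (y - xstar) ⬝ᵥ A.mulVec (y - xstar)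
        = y ⬝ᵥ A.mulVec y - y ⬝ᵥ b - b ⬝ᵥ y + xstar ⬝ᵥ b := by
      rw [Matrix.mulVec_sub, sub_dotProduct, dotProduct_sub,
        dotProduct_sub, e1, e2, e3]
      ring
    rw [hf y, hf xstar, expand]
    linarith
  -- spectral decomposition
  set U : Matrix (Fin d) (Fin d) ℝ := (hH.eigenvectorUnitary : Matrix (Fin d) (Fin d) ℝ)
    with hUdef
  have hUmem : U ∈ Matrix.unitaryGroup (Fin d) ℝ := (hH.eigenvectorUnitary).2
  have hU1 : U * star U = 1 := (Matrix.mem_unitaryGroup_iff).mp hUmem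
  have hU2 : star U * U = 1 := (Matrix.mem_unitaryGroup_iff').mp hUmem
  set v := hH.eigenvalues with hvdef
  have hAeq : A = U * Matrix.diagonal v * star U := by
    simpa using hH.spectral_theorem
  have hv : ∀ i, v i ∈ Set.Icc ℓ L := fun i => hspec (hH.eigenvalues_mem_spectrum_real i)
  -- the iteration matrix
  set r : Fin d → ℝ := fun i => (RsPoly s η).eval (-hh * v i) with hrdef
  set M := Polynomial.aeval ((-hh) • A) (RsPoly s η) with hMdef
  have hvs : (fun i => -hh * v i) = (-hh) • v := by funext i; simp
  have hsmul : (-hh) • A = U * Matrix.diagonal (fun i => -hh * v i) * star U := by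
    rw [hAeq, hvs, Matrix.diagonal_smul, mul_smul_comm, smul_mul_assoc]
  have hMeq : M = U * Matrix.diagonal r * star U := by
    rw [hMdef, hsmul, conj_aeval U _ hU1 hU2, aeval_diagonal]
  -- M * A * M
  have hMAM : M * A * M = U * Matrix.diagonal (fun i => r i * v i * r i) * star U := by
    rw [hMeq, hAeq, myConjMul U _ _ hU2, myConjMul U _ _ hU2,
      Matrix.diagonal_mul_diagonal, Matrix.diagonal_mul_diagonal]
  -- the PSD matrix
  have hkey : ∀ i, (r i)^2 ≤ α^2 := by
    intro i
    exact key_scalar ℓ L η hℓ hℓL hκ hη (v i) (hv i)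
  have hNpsd : (α^2 • A - M * A * M).PosSemidef := by
    have hNeq : α^2 • A - M * A * M
        = U * Matrix.diagonal (fun i => α^2 * v i - r i * v i * r i) * star U := by
      have hvs2 : (fun i => α^2 * v i) = (α^2) • v := by funext i; simp
      have hsm2 : α^2 • A = U * Matrix.diagonal (fun i => α^2 * v i) * star U := by
        rw [hAeq, hvs2, Matrix.diagonal_smul, mul_smul_comm, smul_mul_assoc]
      rw [hMAM, hsm2, ← Matrix.sub_mul, ← Matrix.mul_sub, ← Matrix.diagonal_sub]
    rw [hNeq]
    have hdiag : (Matrix.diagonal (fun i => α^2 * v i - r i * v i * r i)).PosSemidef := by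
      rw [Matrix.posSemidef_diagonal_iff]
      intro i
      have h1 := hkey i
      have h2 := (hv i).1
      nlinarith
    have := hdiag.mul_mul_conjTranspose_same U
    rwa [← Matrix.star_eq_conjTranspose] at this
  -- quadratic forms
  set w := x n - xstar with hwdef
  have hit : x (n+1) - xstar = M.mulVec w := hiter n
  have hMsym : Mᵀ = M := by
    rw [hMeq]
    have hstar : star U = Uᵀ := by
      ext i j
      simp [Matrix.star_apply]
    rw [hstar, Matrix.transpose_mul, Matrix.transpose_mul, Matrix.transpose_transpose,
      Matrix.diagonal_transpose, Matrix.mul_assoc]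
  have hMv : M.mulVec w = Matrix.vecMul w M := by
    rw [← Matrix.mulVec_transpose M w, hMsym]
  have hquad : (M.mulVec w) ⬝ᵥ A.mulVec (M.mulVec w) = w ⬝ᵥ (M * A * M).mulVec w := by
    calc (M.mulVec w) ⬝ᵥ A.mulVec (M.mulVec w)
        = (Matrix.vecMul w M) ⬝ᵥ ((A*M).mulVec w) := by rw [Matrix.mulVec_mulVec, hMv]
      _ = w ⬝ᵥ (M.mulVec ((A*M).mulVec w)) := (Matrix.dotProduct_mulVec w M _).symm
      _ = w ⬝ᵥ ((M*A*M).mulVec w) := by rw [Matrix.mulVec_mulVec, Matrix.mul_assoc]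
  have hpsd := hNpsd.dotProduct_mulVec_nonneg w
  have hws : star w = w := by simp
  rw [hws] at hpsd
  have hexp : w ⬝ᵥ ((α^2 • A - M * A * M).mulVec w)
      = α^2 * (w ⬝ᵥ A.mulVec w) - w ⬝ᵥ ((M*A*M).mulVec w) := by
    rw [Matrix.sub_mulVec, dotProduct_sub, Matrix.smul_mulVec,
      dotProduct_smul]
    simp [smul_eq_mul]
  have hineq : w ⬝ᵥ ((M*A*M).mulVec w) ≤ α^2 * (w ⬝ᵥ A.mulVec w) := by
    rw [hexp] at hpsd; linarith
  have g1 := ffd (x (n+1))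
  have g2 := ffd (x n)
  rw [hit] at g1
  rw [← hwdef] at g2
  rw [g1, g2, hquad]
  linarith
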